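/- Let n = (n₁, n₂) ∈ ℝ² be a unit vector, γ > 1, λ ∈ ℝ, and u = (ρ, m₁, m₂, E) ∈ ℝ⁴ with ρ > 0. The Lax–Friedrichs numerical flux evaluated at the mirror-reflected boundary pair, H = (1/2)(n·F(u) + n·F(Γ_M(u))) + (λ/2)(u − Γ_M(u)), has the pure normal-pressure structure H = (0, P̃ n₁, P̃ n₂, 0), where P̃ = p(u) + (m·n)²/ρ + λ(m·n). -/

import Mathlib

/-- Pressure `p(u) = (γ−1)(E − (m₁² + m₂²)/(2ρ))`. -/
noncomputable def pressure (γ : ℝ) (u : Fin 4 → ℝ) : ℝ :=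
  (γ - 1) * (u 3 - (u 1 ^ 2 + u 2 ^ 2) / (2 * u 0))

/-- The normal Euler flux `n·F(u)`. -/
noncomputable def normalFlux (γ n₁ n₂ : ℝ) (u : Fin 4 → ℝ) : Fin 4 → ℝ :=
  ![u 1 * n₁ + u 2 * n₂,
    (u 1 / u 0) * (u 1 * n₁ + u 2 * n₂) + pressure γ u * n₁,
    (u 2 / u 0) * (u 1 * n₁ + u 2 * n₂) + pressure γ u * n₂,
    ((u 3 + pressure γ u) / u 0) * (u 1 * n₁ + u 2 * n₂)]

/-- The mirror-reflection boundary operator `Γ_M(u) = (ρ, m − 2(m·n)n, E)`. -/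
def mirrorRefl (n₁ n₂ : ℝ) (u : Fin 4 → ℝ) : Fin 4 → ℝ :=
  ![u 0,
    u 1 - 2 * (u 1 * n₁ + u 2 * n₂) * n₁,
    u 2 - 2 * (u 1 * n₁ + u 2 * n₂) * n₂,
    u 3]

/-- The Lax–Friedrichs numerical flux with dissipation parameter `λ`:
`H(u, v, n) = (1/2)(n·F(u) + n·F(v)) + (λ/2)(u − v)`. -/
noncomputable def laxFriedrichs (γ n₁ n₂ lam : ℝ) (u v : Fin 4 → ℝ) : Fin 4 → ℝ :=
  (1 / 2 : ℝ) • (normalFlux γ n₁ n₂ u + normalFlux γ n₁ n₂ v) +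
    (lam / 2 : ℝ) • (u - v)

/-- For a unit vector `n`, `γ > 1`, `λ ∈ ℝ`, and a state `u` with
`ρ > 0`, the Lax–Friedrichs flux at the mirror-reflected boundary pair has the
pure normal-pressure structure `H = (0, P̃n₁, P̃n₂, 0)` with
`P̃ = p(u) + (m·n)²/ρ + λ(m·n)`. -/
theorem laxFriedrichs_mirror (n₁ n₂ γ lam : ℝ) (hn : n₁ ^ 2 + n₂ ^ 2 = 1)
    (hγ : 1 < γ) (u : Fin 4 → ℝ) (hρ : 0 < u 0) :
    laxFriedrichs γ n₁ n₂ lam u (mirrorRefl n₁ n₂ u) =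
      ![0,
        (pressure γ u + (u 1 * n₁ + u 2 * n₂) ^ 2 / u 0 +
          lam * (u 1 * n₁ + u 2 * n₂)) * n₁,
        (pressure γ u + (u 1 * n₁ + u 2 * n₂) ^ 2 / u 0 +
          lam * (u 1 * n₁ + u 2 * n₂)) * n₂,
        0] := by
  have h0 : u 0 ≠ 0 := hρ.ne'
  have hm0 : mirrorRefl n₁ n₂ u 0 = u 0 := rfl
  have hm1 : mirrorRefl n₁ n₂ u 1 = u 1 - 2 * (u 1 * n₁ + u 2 * n₂) * n₁ := rfl
  have hm2 : mirrorRefl n₁ n₂ u 2 = u 2 - 2 * (u 1 * n₁ + u 2 * n₂) * n₂ := rfl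
  have hm3 : mirrorRefl n₁ n₂ u 3 = u 3 := rfl
  have hp : pressure γ (mirrorRefl n₁ n₂ u) = pressure γ u := by
    simp only [pressure, hm0, hm1, hm2, hm3]
    field_simp
    congr 1
    symm
    linear_combination 4*(u 1*n₁+u 2*n₂)^2*hn
  have key : (u 1 - 2 * (u 1 * n₁ + u 2 * n₂) * n₁) * n₁ +
      (u 2 - 2 * (u 1 * n₁ + u 2 * n₂) * n₂) * n₂ = -(u 1 * n₁ + u 2 * n₂) := by
    linear_combination (-2*(u 1 * n₁ + u 2 * n₂))*hn
  funext i
  fin_cases i <;>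
    simp only [laxFriedrichs, normalFlux, hp, Pi.add_apply, Pi.smul_apply, Pi.sub_apply,
      smul_eq_mul, Fin.isValue, Fin.mk_zero, Fin.mk_one,
      show (⟨2, by norm_num⟩ : Fin 4) = 2 from rfl, show (⟨3, by norm_num⟩ : Fin 4) = 3 from rfl] <;>
    simp only [mirrorRefl, Matrix.cons_val_zero, Matrix.cons_val_one, Matrix.head_cons,
      Matrix.cons_val_two, Matrix.tail_cons, Matrix.cons_val_three, Matrix.cons_val',
      Matrix.cons_val_fin_one, Matrix.empty_val', Fin.isValue] <;>
    rw [key] <;> field_simp <;> ring
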